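/- The function α ↦ ∫_{-∞}^{∞} η(z, α)^2 φ(z) dz is differentiable on (0, ∞), with derivative at α equal to -4[φ(α) - αΦ(-α)]. -/

import Mathlib

open MeasureTheory Filter

/-- Standard normal probability density function. -/
noncomputable def stdNormalPDF (x : ℝ) : ℝ :=
  (Real.sqrt (2 * Real.pi))⁻¹ * Real.exp (-(x ^ 2) / 2)

/-- Standard normal cumulative distribution function. -/
noncomputable def stdNormalCDF (x : ℝ) : ℝ :=
  ∫ t in Set.Iic x, stdNormalPDF t

/-- Soft-thresholding function `η(x, λ) = sign(x) · max(|x| − λ, 0)`. -/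
noncomputable def softThreshold (x lam : ℝ) : ℝ :=
  Real.sign x * max (|x| - lam) 0

open Set Real Topology

section Aux

lemma pdf_eq' (x : ℝ) :
    stdNormalPDF x = (Real.sqrt (2 * Real.pi))⁻¹ * Real.exp (-(2⁻¹ : ℝ) * x ^ 2) := by
  rw [stdNormalPDF]; ring_nf

lemma pdf_nonneg (x : ℝ) : 0 ≤ stdNormalPDF x :=
  mul_nonneg (inv_nonneg.2 (Real.sqrt_nonneg _)) (Real.exp_pos _).le

lemma pdf_even (x : ℝ) : stdNormalPDF (-x) = stdNormalPDF x := by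
  simp [stdNormalPDF]

lemma pdf_cont : Continuous stdNormalPDF := by
  unfold stdNormalPDF; fun_prop

lemma pdf_integrable : Integrable stdNormalPDF := by
  have h := (integrable_exp_neg_mul_sq (by norm_num : (0:ℝ) < 2⁻¹)).const_mul
    ((Real.sqrt (2 * Real.pi))⁻¹)
  apply h.congr
  filter_upwards with x
  rw [pdf_eq']

lemma mul_pdf_integrable : Integrable (fun z : ℝ => z * stdNormalPDF z) := by
  have h := (integrable_mul_exp_neg_mul_sq (by norm_num : (0:ℝ) < 2⁻¹)).const_mul
    ((Real.sqrt (2 * Real.pi))⁻¹)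
  apply h.congr
  filter_upwards with x
  rw [pdf_eq']; ring

lemma abs_mul_pdf_integrable : Integrable (fun z : ℝ => |z| * stdNormalPDF z) := by
  have h := mul_pdf_integrable.abs
  apply h.congr
  filter_upwards with x
  rw [abs_mul, abs_of_nonneg (pdf_nonneg x)]

lemma sq_exp_bound (z : ℝ) :
    z ^ 2 * Real.exp (-(z ^ 2) / 2) ≤ 4 * Real.exp (-(4⁻¹ : ℝ) * z ^ 2) := by
  have h1 : z ^ 2 ≤ 4 * Real.exp (4⁻¹ * z ^ 2) := by
    have h := Real.add_one_le_exp (4⁻¹ * z ^ 2)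
    nlinarith
  have h2 := mul_le_mul_of_nonneg_right h1 (Real.exp_pos (-(z ^ 2) / 2)).le
  calc z ^ 2 * Real.exp (-(z ^ 2) / 2)
      ≤ 4 * Real.exp (4⁻¹ * z ^ 2) * Real.exp (-(z ^ 2) / 2) := h2
    _ = 4 * Real.exp (-(4⁻¹ : ℝ) * z ^ 2) := by
        rw [mul_assoc, ← Real.exp_add]; ring_nf

/-- derivative of the PDF -/
lemma hasDerivAt_pdf (z : ℝ) : HasDerivAt stdNormalPDF (-z * stdNormalPDF z) z := by
  have h1 : HasDerivAt (fun z : ℝ => -(z ^ 2) / 2) (-z) z := by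
    have := ((hasDerivAt_pow 2 z).neg).div_const 2
    refine this.congr_deriv ?_
    push_cast
    ring
  have h2 := h1.exp
  have h3 := h2.const_mul ((Real.sqrt (2 * Real.pi))⁻¹)
  have : HasDerivAt (fun x : ℝ => (Real.sqrt (2 * Real.pi))⁻¹ * Real.exp (-(x ^ 2) / 2))
      (-z * stdNormalPDF z) z := by
    refine h3.congr_deriv ?_
    rw [stdNormalPDF]; ring
  exact this

lemma hasDerivAt_cdf (x : ℝ) : HasDerivAt stdNormalCDF (stdNormalPDF x) x := by
  have key : ∀ y : ℝ, stdNormalCDF y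
      = stdNormalCDF 0 + ∫ t in (0:ℝ)..y, stdNormalPDF t := by
    intro y
    have := intervalIntegral.integral_Iic_sub_Iic (μ := volume) (f := stdNormalPDF)
      (a := 0) (b := y) pdf_integrable.integrableOn pdf_integrable.integrableOn
    simp only [stdNormalCDF]
    linarith [this]
  have hfi : HasDerivAt (fun y : ℝ => ∫ t in (0:ℝ)..y, stdNormalPDF t) (stdNormalPDF x) x :=
    intervalIntegral.integral_hasDerivAt_right pdf_integrable.intervalIntegrable
      pdf_cont.stronglyMeasurable.stronglyMeasurableAtFilter pdf_cont.continuousAt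
  exact (hfi.const_add (stdNormalCDF 0)).congr_of_eventuallyEq
    (Eventually.of_forall key)

lemma pdf_tendsto_atTop : Tendsto stdNormalPDF atTop (𝓝 0) := by
  have h1 : Tendsto (fun x : ℝ => -(x ^ 2) / 2) atTop atBot := by
    apply Filter.Tendsto.atBot_div_const (by norm_num : (0:ℝ) < 2)
    exact tendsto_neg_atTop_atBot.comp (tendsto_pow_atTop (by norm_num))
  have h2 : Tendsto (fun x : ℝ => Real.exp (-(x ^ 2) / 2)) atTop (𝓝 0) :=
    Real.tendsto_exp_atBot.comp h1
  have h3 := h2.const_mul ((Real.sqrt (2 * Real.pi))⁻¹)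
  rw [mul_zero] at h3
  exact h3

lemma cdf_tendsto_atBot : Tendsto stdNormalCDF atBot (𝓝 0) := by
  have hlim := tendsto_limUnder_of_hasDerivAt_of_integrableOn_Iic (a := 0)
    (f := stdNormalCDF) (f' := stdNormalPDF)
    (fun x _ => hasDerivAt_cdf x) pdf_integrable.integrableOn
  have h0 := integral_Iic_of_hasDerivAt_of_tendsto (a := (0:ℝ))
    (f := stdNormalCDF) (f' := stdNormalPDF)
    (hasDerivAt_cdf 0).continuousAt.continuousWithinAt
    (fun x _ => hasDerivAt_cdf x) pdf_integrable.integrableOn hlim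
  have : (∫ x in Iic (0:ℝ), stdNormalPDF x) = stdNormalCDF 0 := rfl
  rw [this] at h0
  have hL : limUnder atBot stdNormalCDF = 0 := by linarith
  rwa [hL] at hlim

/-- derivative of `t ↦ max t 0 ^ 2` -/
lemma hasDerivAt_posSq (t : ℝ) :
    HasDerivAt (fun s : ℝ => max s 0 ^ 2) (2 * max t 0) t := by
  rcases lt_trichotomy t 0 with ht | rfl | ht
  · rw [max_eq_right ht.le, mul_zero]
    apply (hasDerivAt_const t (0:ℝ)).congr_of_eventuallyEq
    filter_upwards [Iio_mem_nhds ht] with s hs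
    simp [max_eq_right (le_of_lt (mem_Iio.1 hs))]
  · have h0 : (2 : ℝ) * max 0 0 = 0 := by simp
    rw [h0, hasDerivAt_iff_tendsto_slope]
    have hb : ∀ y : ℝ, ‖slope (fun s : ℝ => max s 0 ^ 2) 0 y‖ ≤ |y| := by
      intro y
      rcases eq_or_ne y 0 with rfl | hy
      · simp [slope]
      · rw [slope_def_field]
        simp only [max_self, ne_eq, OfNat.ofNat_ne_zero, not_false_eq_true, zero_pow,
          sub_zero]
        rw [div_eq_mul_inv, norm_mul, norm_inv]
        have h1 : ‖max y 0 ^ 2‖ ≤ |y| * |y| := by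
          rw [Real.norm_eq_abs, abs_of_nonneg (sq_nonneg _), sq]
          have := max_le (le_abs_self y) (abs_nonneg y)
          exact mul_le_mul this this (le_max_right y 0) (abs_nonneg y)
        calc ‖max y 0 ^ 2‖ * ‖y‖⁻¹ ≤ |y| * |y| * ‖y‖⁻¹ := by
              apply mul_le_mul_of_nonneg_right h1 (by positivity)
          _ = |y| := by
              rw [Real.norm_eq_abs, mul_assoc, mul_inv_cancel₀ (abs_ne_zero.2 hy), mul_one]
    apply squeeze_zero_norm hb
    have : Tendsto (fun y : ℝ => |y|) (𝓝 0) (𝓝 0) := by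
      simpa using continuous_abs.tendsto (0:ℝ)
    exact this.mono_left nhdsWithin_le_nhds
  · have heq : (2 : ℝ) * max t 0 = ↑(2:ℕ) * t ^ 1 := by
      rw [max_eq_left ht.le]; norm_num
    rw [heq]
    apply (hasDerivAt_pow 2 t).congr_of_eventuallyEq
    filter_upwards [Ioi_mem_nhds ht] with s hs
    rw [max_eq_left (le_of_lt (mem_Ioi.1 hs))]

lemma hasDerivAt_maxsq (c x : ℝ) :
    HasDerivAt (fun a : ℝ => max (c - a) 0 ^ 2) (-(2 * max (c - x) 0)) x := by
  have h1 : HasDerivAt (fun a : ℝ => c - a) (0 - 1) x :=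
    (hasDerivAt_const x c).sub (hasDerivAt_id x)
  have h2 := (hasDerivAt_posSq (c - x)).comp x h1
  simpa [Function.comp_def] using h2

lemma pos_part_integrable (α : ℝ) (hα : 0 < α) :
    Integrable (fun z : ℝ => max (|z| - α) 0 * stdNormalPDF z) := by
  apply Integrable.mono' abs_mul_pdf_integrable
  · exact ((continuous_abs.sub continuous_const).max continuous_const).mul pdf_cont
      |>.aestronglyMeasurable
  · filter_upwards with z
    rw [Real.norm_eq_abs, abs_of_nonneg (mul_nonneg (le_max_right _ _) (pdf_nonneg z))]
    apply mul_le_mul_of_nonneg_right _ (pdf_nonneg z)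
    exact max_le (by linarith [abs_nonneg z]) (abs_nonneg z)

lemma key_integral (α : ℝ) (hα : 0 < α) :
    (∫ z : ℝ, max (|z| - α) 0 * stdNormalPDF z)
      = 2 * (stdNormalPDF α - α * stdNormalCDF (-α)) := by
  set h : ℝ → ℝ := fun z => max (|z| - α) 0 * stdNormalPDF z with hh
  have hint : Integrable h := pos_part_integrable α hα
  -- even function
  have heven : ∀ z, h (-z) = h z := by
    intro z; simp only [hh, abs_neg, pdf_even]
  have hIic : (∫ z in Iic (0:ℝ), h z) = ∫ z in Ioi (0:ℝ), h z := by
    rw [show (Ioi (0:ℝ)) = Ioi (-(0:ℝ)) by norm_num, ← integral_comp_neg_Iic]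
    exact setIntegral_congr_fun measurableSet_Iic fun z _ => (heven z).symm
  have hsplit : (∫ z, h z) = 2 * ∫ z in Ioi (0:ℝ), h z := by
    rw [← intervalIntegral.integral_Iic_add_Ioi hint.integrableOn hint.integrableOn, hIic]; ring
  -- split Ioi 0 = Ioc 0 α ∪ Ioi α
  have hu : Ioc (0:ℝ) α ∪ Ioi α = Ioi 0 := Ioc_union_Ioi_eq_Ioi hα.le
  have hsplit2 : (∫ z in Ioi (0:ℝ), h z)
      = (∫ z in Ioc (0:ℝ) α, h z) + ∫ z in Ioi α, h z := by
    rw [← hu, setIntegral_union (Ioc_disjoint_Ioi le_rfl) measurableSet_Ioi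
      hint.integrableOn hint.integrableOn]
  have hzero : (∫ z in Ioc (0:ℝ) α, h z) = 0 := by
    rw [setIntegral_congr_fun measurableSet_Ioc
      (g := fun _ => (0:ℝ)) ?_, integral_zero]
    intro z hz
    have : |z| = z := abs_of_pos hz.1
    simp only [hh, this, max_eq_right (by linarith [hz.2] : z - α ≤ 0), zero_mul]
  -- FTC on Ioi α
  have hIoi : (∫ z in Ioi α, h z) = stdNormalPDF α - α * stdNormalCDF (-α) := by
    have hcongr : (∫ z in Ioi α, h z) = ∫ z in Ioi α, (z - α) * stdNormalPDF z := by
      apply setIntegral_congr_fun measurableSet_Ioi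
      intro z hz
      have hz0 : (0:ℝ) < z := lt_trans hα hz
      simp only [hh, abs_of_pos hz0, max_eq_left (by linarith [mem_Ioi.1 hz] : (0:ℝ) ≤ z - α)]
    rw [hcongr]
    set f : ℝ → ℝ := fun z => -stdNormalPDF z + α * stdNormalCDF (-z) with hf
    have hderiv : ∀ z : ℝ, HasDerivAt f ((z - α) * stdNormalPDF z) z := by
      intro z
      have h1 : HasDerivAt (fun z : ℝ => -stdNormalPDF z) (-(-z * stdNormalPDF z)) z :=
        (hasDerivAt_pdf z).neg
      have h2 : HasDerivAt (fun z : ℝ => stdNormalCDF (-z))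
          (stdNormalPDF (-z) * (-1)) z :=
        (hasDerivAt_cdf (-z)).comp z (hasDerivAt_neg z)
      have h3 := h1.add (h2.const_mul α)
      refine h3.congr_deriv ?_
      rw [pdf_even]; ring
    have hintOn : IntegrableOn (fun z : ℝ => (z - α) * stdNormalPDF z) (Ioi α) := by
      have : Integrable (fun z : ℝ => z * stdNormalPDF z - α * stdNormalPDF z) :=
        mul_pdf_integrable.sub (pdf_integrable.const_mul α)
      apply (this.congr ?_).integrableOn
      filter_upwards with z; ring
    have htend : Tendsto f atTop (𝓝 0) := by
      have h1 := pdf_tendsto_atTop.neg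
      have h2 := (cdf_tendsto_atBot.comp tendsto_neg_atTop_atBot).const_mul α
      have := h1.add h2
      simpa using this
    have := integral_Ioi_of_hasDerivAt_of_tendsto
      (hderiv α).continuousAt.continuousWithinAt
      (fun x _ => hderiv x) hintOn htend
    rw [this, hf]; ring
  rw [hsplit, hsplit2, hzero, hIoi]; ring

lemma sq_pos_part_integrable (a : ℝ) (ha : 0 ≤ a) :
    Integrable (fun z : ℝ => max (|z| - a) 0 ^ 2 * stdNormalPDF z) := by
  have hbd : Integrable (fun z : ℝ =>
      (Real.sqrt (2 * Real.pi))⁻¹ * (4 * Real.exp (-(4⁻¹ : ℝ) * z ^ 2))) :=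
    ((integrable_exp_neg_mul_sq (by norm_num : (0:ℝ) < 4⁻¹)).const_mul 4).const_mul _
  apply Integrable.mono' hbd
  · exact (((continuous_abs.sub continuous_const).max continuous_const).pow 2).mul pdf_cont
      |>.aestronglyMeasurable
  · filter_upwards with z
    rw [Real.norm_eq_abs, abs_of_nonneg (mul_nonneg (by positivity) (pdf_nonneg z))]
    have h1 : max (|z| - a) 0 ^ 2 ≤ z ^ 2 := by
      have hm : max (|z| - a) 0 ≤ |z| := max_le (by linarith [abs_nonneg z]) (abs_nonneg z)
      calc max (|z| - a) 0 ^ 2 ≤ |z| ^ 2 :=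
            pow_le_pow_left₀ (le_max_right _ _) hm 2
        _ = z ^ 2 := sq_abs z
    calc max (|z| - a) 0 ^ 2 * stdNormalPDF z
        ≤ z ^ 2 * stdNormalPDF z := mul_le_mul_of_nonneg_right h1 (pdf_nonneg z)
      _ = (Real.sqrt (2 * Real.pi))⁻¹ * (z ^ 2 * Real.exp (-(z ^ 2) / 2)) := by
          rw [stdNormalPDF]; ring
      _ ≤ (Real.sqrt (2 * Real.pi))⁻¹ * (4 * Real.exp (-(4⁻¹ : ℝ) * z ^ 2)) := by
          apply mul_le_mul_of_nonneg_left (sq_exp_bound z) (by positivity)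

end Aux

theorem null_risk_deriv_in_alpha (α : ℝ) (hα : 0 < α) :
    HasDerivAt (fun α : ℝ => ∫ z : ℝ, softThreshold z α ^ 2 * stdNormalPDF z)
      (-(4 * (stdNormalPDF α - α * stdNormalCDF (-α)))) α := by
  have main := hasDerivAt_integral_of_dominated_loc_of_deriv_le (μ := volume)
    (F := fun (a : ℝ) (z : ℝ) => max (|z| - a) 0 ^ 2 * stdNormalPDF z)
    (F' := fun (a : ℝ) (z : ℝ) => -(2 * max (|z| - a) 0) * stdNormalPDF z)
    (x₀ := α) (s := Metric.ball α α)
    (bound := fun z : ℝ => 2 * (|z| * stdNormalPDF z)) (Metric.ball_mem_nhds α hα)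
    (Eventually.of_forall fun x =>
      ((((continuous_abs.sub continuous_const).max continuous_const).pow 2).mul
        pdf_cont).aestronglyMeasurable)
    (sq_pos_part_integrable α hα.le)
    (((continuous_const.mul ((continuous_abs.sub continuous_const).max
      continuous_const)).neg.mul pdf_cont)).aestronglyMeasurable
    (Eventually.of_forall fun z => by
      intro x hx
      rw [Metric.mem_ball, Real.dist_eq] at hx
      have hx0 : 0 < x := by cases abs_lt.1 hx; linarith
      rw [norm_mul, Real.norm_eq_abs, Real.norm_eq_abs, abs_of_nonneg (pdf_nonneg z),
        abs_neg, abs_of_nonneg (by positivity : (0:ℝ) ≤ 2 * max (|z| - x) 0)]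
      have hm : max (|z| - x) 0 ≤ |z| :=
        max_le (by linarith [abs_nonneg z]) (abs_nonneg z)
      rw [mul_assoc]
      exact mul_le_mul_of_nonneg_left
        (mul_le_mul_of_nonneg_right hm (pdf_nonneg z)) (by norm_num))
    (abs_mul_pdf_integrable.const_mul 2)
    (Eventually.of_forall fun z => by
      intro x hx
      exact (hasDerivAt_maxsq |z| x).mul_const (stdNormalPDF z))
  have hD := main.2
  -- compute the derivative value
  have hval : (∫ z : ℝ, -(2 * max (|z| - α) 0) * stdNormalPDF z)
      = -(4 * (stdNormalPDF α - α * stdNormalCDF (-α))) := by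
    have h1 : (∫ z : ℝ, -(2 * max (|z| - α) 0) * stdNormalPDF z)
        = -(2 * ∫ z : ℝ, max (|z| - α) 0 * stdNormalPDF z) := by
      rw [← integral_const_mul, ← integral_neg]
      congr 1; funext z; ring
    rw [h1, key_integral α hα]; ring
  rw [hval] at hD
  -- transfer back to softThreshold
  apply hD.congr_of_eventuallyEq
  filter_upwards [Ioi_mem_nhds hα] with a ha
  congr 1
  funext z
  congr 1
  rcases lt_trichotomy z 0 with hz | rfl | hz
  · rw [softThreshold, Real.sign_of_neg hz]; ring
  · have h0 : -a ≤ (0:ℝ) := by linarith [mem_Ioi.1 ha]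
    simp [softThreshold, Real.sign_zero, max_eq_right h0]
  · rw [softThreshold, Real.sign_of_pos hz]; ring
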